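/- Fix α ≠ 0 and let 𝔤 = 𝔤^α_{4.2} be the 4-dimensional real Lie algebra with basis e₁,...,e₄ and nonzero brackets [e₁,e₄] = αe₁, [e₂,e₄] = e₂, [e₃,e₄] = e₂ + e₃. A 4×4 real matrix R equals η·Id + D for some η ∈ ℝ and some derivation D of 𝔤 if and only if R₃₂ = R₄₁ = R₄₂ = R₄₃ = 0, R₂₁ + R₃₁ = αR₂₁, R₃₁ = αR₃₁, R₁₂ = αR₁₂, R₁₂ + R₁₃ = αR₁₃, and R₃₃ = R₂₂. In this case η = R₄₄. -/

import Mathlib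

open Matrix

def br (α : ℝ) (x y : Fin 4 → ℝ) : Fin 4 → ℝ :=
  ![α * (x 0 * y 3 - x 3 * y 0), (x 1 * y 3 - x 3 * y 1) + (x 2 * y 3 - x 3 * y 2), (x 2 * y 3 - x 3 * y 2), (0:ℝ)]

def IsDer (α : ℝ) (D : Matrix (Fin 4) (Fin 4) ℝ) : Prop :=
  ∀ x y : Fin 4 → ℝ, D.mulVec (br α x y) = br α (D.mulVec x) y + br α x (D.mulVec y)

theorem stmt_12 (α : ℝ) (hα : α ≠ 0) (R : Matrix (Fin 4) (Fin 4) ℝ) :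
    ((∃ (η : ℝ) (D : Matrix (Fin 4) (Fin 4) ℝ), IsDer α D ∧
        R = η • (1 : Matrix (Fin 4) (Fin 4) ℝ) + D) ↔
      (R 2 1 = 0 ∧ R 3 0 = 0 ∧ R 3 1 = 0 ∧ R 3 2 = 0 ∧ R 1 0 + R 2 0 = α * R 1 0 ∧ R 2 0 = α * R 2 0 ∧ R 0 1 = α * R 0 1 ∧ R 0 1 + R 0 2 = α * R 0 2 ∧ R 2 2 = R 1 1)) ∧
    (∀ (η : ℝ) (D : Matrix (Fin 4) (Fin 4) ℝ), IsDer α D →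
      R = η • (1 : Matrix (Fin 4) (Fin 4) ℝ) + D → η = R 3 3) := by
  constructor
  · constructor
    · rintro ⟨η, D, hD, rfl⟩
      have h03 := hD ![1,0,0,0] ![0,0,0,1]
      have h13 := hD ![0,1,0,0] ![0,0,0,1]
      have h23 := hD ![0,0,1,0] ![0,0,0,1]
      simp -failIfUnchanged only [show (Fin.succ 2 : Fin 4) = 3 from rfl] at h03 h13 h23
      simp [br, mulVec, dotProduct, Fin.sum_univ_four, funext_iff, Fin.forall_fin_succ] at h03 h13 h23
      simp -failIfUnchanged only [show (Fin.succ 2 : Fin 4) = 3 from rfl] at h03 h13 h23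
      have hd33 : D 3 3 = 0 := by
        have h : α * D 3 3 = 0 := by linear_combination -h03.1
        exact (mul_eq_zero.mp h).resolve_left hα
      have hd30 : D 3 0 = 0 := h03.2.2.2.resolve_right hα
      have hd31 : D 3 1 = 0 := h13.2.2
      have hd32 : D 3 2 = 0 := by linarith [h23.2.2.2]
      have hd21 : D 2 1 = 0 := by linarith [h13.2.1]
      have hd1122 : D 2 2 = D 1 1 := by linarith [h23.2.1]
      refine ⟨?_, ?_, ?_, ?_, ?_, ?_, ?_, ?_, ?_⟩ <;>
        simp [Matrix.add_apply, Matrix.smul_apply, Matrix.one_apply, hd33, hd30, hd31, hd32,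
          hd21, hd1122]
      · linear_combination -h03.2.1
      · linear_combination -h03.2.2.1
      · linear_combination h13.1
      · linear_combination h23.1
    · rintro ⟨h1, h2, h3, h4, h5, h6, h7, h8, h9⟩
      refine ⟨R 3 3, R - R 3 3 • 1, ?_, by abel⟩
      intro x y
      funext i
      fin_cases i <;>
        simp [br, mulVec, dotProduct, Fin.sum_univ_four, Matrix.sub_apply, Matrix.smul_apply,
          Matrix.one_apply, Pi.add_apply]
      · linear_combination (x 1 * y 3 - x 3 * y 1) * h7 + (x 2 * y 3 - x 3 * y 2) * h8 +
          (α * (x 1 * y 0 - x 0 * y 1)) * h3 + (α * (x 2 * y 0 - x 0 * y 2)) * h4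
      · linear_combination (-(x 0 * y 3 - x 3 * y 0)) * h5 - (x 1 * y 3 - x 3 * y 1) * h1 -
          (x 2 * y 3 - x 3 * y 2) * h9 + (x 0 * (y 1 + y 2) - (x 1 + x 2) * y 0) * h2 +
          (x 1 * y 2 - x 2 * y 1) * h3 + (x 2 * y 1 - x 1 * y 2) * h4
      · linear_combination (-(x 0 * y 3 - x 3 * y 0)) * h6 + (x 2 * y 3 - x 3 * y 2) * h1 +
          (x 0 * y 2 - x 2 * y 0) * h2 + (x 1 * y 2 - x 2 * y 1) * h3
      · linear_combination (α * (x 0 * y 3 - x 3 * y 0)) * h2 +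
          ((x 1 * y 3 - x 3 * y 1) + (x 2 * y 3 - x 3 * y 2)) * h3 + (x 2 * y 3 - x 3 * y 2) * h4
  · intro η D hD hR
    have h03 := hD ![1,0,0,0] ![0,0,0,1]
    simp [br, mulVec, dotProduct, Fin.sum_univ_four, funext_iff, Fin.forall_fin_succ] at h03
    have hd33 : D 3 3 = 0 := by
      have h : α * D 3 3 = 0 := by linear_combination -h03.1
      exact (mul_eq_zero.mp h).resolve_left hα
    have : R 3 3 = η + D 3 3 := by
      rw [hR]; simp [Matrix.add_apply, Matrix.smul_apply, Matrix.one_apply]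
    rw [this, hd33, add_zero]
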